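/- Let m > 1 be real and β ≥ m be real. Then every root of p_β(z) = sin(mπz) - β·sin(πz) with β > m is simple, i.e., p_β(z) = 0 and p_β'(z) = 0 cannot hold simultaneously when β > m. -/
import Mathlib


open Complex Real

/-- `t * cosh t - sinh t > 0` for `t > 0`. -/
private lemma aux_g {t : ℝ} (ht : 0 < t) : Real.sinh t < t * Real.cosh t := by
  have hmono : StrictMonoOn (fun t : ℝ => t * Real.cosh t - Real.sinh t) (Set.Ici 0) := by
    apply strictMonoOn_of_deriv_pos (convex_Ici 0)
    · fun_prop
    · intro x hx
      rw [interior_Ici] at hx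
      have hd : HasDerivAt (fun t : ℝ => t * Real.cosh t - Real.sinh t)
          (1 * Real.cosh x + x * Real.sinh x - Real.cosh x) x :=
        ((hasDerivAt_id x).mul (Real.hasDerivAt_cosh x)).sub (Real.hasDerivAt_sinh x)
      rw [hd.deriv]
      have hx' : (0:ℝ) < x := hx
      have : 0 < Real.sinh x := Real.sinh_pos_iff.mpr hx'
      nlinarith [mul_pos hx' this]
  have := hmono (Set.self_mem_Ici) (Set.mem_Ici.mpr ht.le) ht
  simpa using this

/-- `sinh t / t` is strictly increasing on positives: `v * sinh u < u * sinh v` for `0 < u < v`. -/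
private lemma aux_key {u v : ℝ} (hu : 0 < u) (huv : u < v) :
    v * Real.sinh u < u * Real.sinh v := by
  have hv : 0 < v := hu.trans huv
  have hmono : StrictMonoOn (fun t : ℝ => Real.sinh t / t) (Set.Ioi 0) := by
    apply strictMonoOn_of_deriv_pos (convex_Ioi 0)
    · apply ContinuousOn.div Real.continuous_sinh.continuousOn continuousOn_id
      intro x hx; exact ne_of_gt hx
    · intro x hx
      rw [interior_Ioi] at hx
      have hx0 : (0:ℝ) < x := hx
      have hd : HasDerivAt (fun t : ℝ => Real.sinh t / t)
          ((Real.cosh x * x - Real.sinh x * 1) / x ^ 2) x :=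
        (Real.hasDerivAt_sinh x).div (hasDerivAt_id x) (ne_of_gt hx0)
      rw [hd.deriv]
      have := aux_g hx0
      apply div_pos (by nlinarith) (by positivity)
  have := hmono (Set.mem_Ioi.mpr hu) (Set.mem_Ioi.mpr hv) huv
  rw [div_lt_div_iff₀ hu hv] at this
  linarith

/-- For `m > 1` and `B > 0`: `tanh (mB) < m tanh B`, in cleared form. -/
private lemma aux_star {m B : ℝ} (hm : 1 < m) (hB : 0 < B) :
    Real.sinh (m * B) * Real.cosh B < m * (Real.cosh (m * B) * Real.sinh B) := by
  have hu : 0 < (m - 1) * B := by nlinarith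
  have huv : (m - 1) * B < (m + 1) * B := by nlinarith
  have h := aux_key hu huv
  have e1 : (m - 1) * B = m * B - B := by ring
  have e2 : (m + 1) * B = m * B + B := by ring
  rw [e1, e2, Real.sinh_sub, Real.sinh_add] at h
  nlinarith [h, hB]

private lemma aux_sin_im (w : ℂ) :
    (Complex.sin w).im = Real.cos w.re * Real.sinh w.im := by
  rw [Complex.sin_eq]
  simp [Complex.add_im, Complex.mul_im, Complex.mul_re, Complex.sin_ofReal_re,
    Complex.sin_ofReal_im, Complex.cos_ofReal_re, Complex.cos_ofReal_im,
    Complex.sinh_ofReal_re, Complex.sinh_ofReal_im, Complex.cosh_ofReal_re,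
    Complex.cosh_ofReal_im]

private lemma aux_cos_re (w : ℂ) :
    (Complex.cos w).re = Real.cos w.re * Real.cosh w.im := by
  rw [Complex.cos_eq]
  simp [Complex.sub_re, Complex.mul_im, Complex.mul_re, Complex.sin_ofReal_re,
    Complex.sin_ofReal_im, Complex.cos_ofReal_re, Complex.cos_ofReal_im,
    Complex.sinh_ofReal_re, Complex.sinh_ofReal_im, Complex.cosh_ofReal_re,
    Complex.cosh_ofReal_im]

theorem roots_simple_of_beta_gt_m (m β : ℝ) (hm : 1 < m) (hβ : m < β) (z : ℂ) :
    ¬ (Complex.sin (m * Real.pi * z) - β * Complex.sin (Real.pi * z) = 0 ∧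
       m * Real.pi * Complex.cos (m * Real.pi * z)
         - β * Real.pi * Complex.cos (Real.pi * z) = 0) := by
  rintro ⟨h1, h2⟩
  have hπ : (Real.pi : ℂ) ≠ 0 := Complex.ofReal_ne_zero.mpr Real.pi_ne_zero
  have hm0 : (0:ℝ) < m := by linarith
  have hβ0 : (0:ℝ) < β := by linarith
  set s := Complex.sin ((Real.pi : ℂ) * z) with hs_def
  set c := Complex.cos ((Real.pi : ℂ) * z) with hc_def
  set S := Complex.sin ((m : ℂ) * (Real.pi : ℂ) * z) with hS_def
  set C := Complex.cos ((m : ℂ) * (Real.pi : ℂ) * z) with hC_def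
  have hs : S = (β : ℂ) * s := by linear_combination h1
  have hc2 : (m : ℂ) * C = (β : ℂ) * c := by
    have h2' : (Real.pi : ℂ) * ((m : ℂ) * C) = (Real.pi : ℂ) * ((β : ℂ) * c) := by
      linear_combination h2
    exact mul_left_cancel₀ hπ h2'
  have pyth1 : s ^ 2 + c ^ 2 = 1 := Complex.sin_sq_add_cos_sq _
  have pyth2 : S ^ 2 + C ^ 2 = 1 := Complex.sin_sq_add_cos_sq _
  -- compute s^2
  have hsq : ((β : ℂ) ^ 2 * ((m : ℂ) ^ 2 - 1)) * s ^ 2 = (m : ℂ) ^ 2 - (β : ℂ) ^ 2 := by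
    have hS2 : S ^ 2 = (β : ℂ) ^ 2 * s ^ 2 := by rw [hs]; ring
    have hC2 : (m : ℂ) ^ 2 * C ^ 2 = (β : ℂ) ^ 2 * c ^ 2 := by
      linear_combination ((m : ℂ) * C + (β : ℂ) * c) * hc2
    linear_combination (m : ℂ) ^ 2 * pyth2 - (m : ℂ) ^ 2 * hS2 - hC2 - (β : ℂ) ^ 2 * pyth1
  have hb2 : ((β : ℂ) ^ 2 * ((m : ℂ) ^ 2 - 1)) ≠ 0 := by
    have h1' : (β : ℂ) ≠ 0 := Complex.ofReal_ne_zero.mpr (ne_of_gt hβ0)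
    have h2' : ((m : ℂ) ^ 2 - 1) ≠ 0 := by
      intro h
      have : ((m^2 - 1 : ℝ) : ℂ) = 0 := by push_cast; linear_combination h
      have := Complex.ofReal_eq_zero.mp this
      nlinarith
    exact mul_ne_zero (pow_ne_zero 2 h1') h2'
  set r : ℝ := (m ^ 2 - β ^ 2) / (β ^ 2 * (m ^ 2 - 1)) with hr_def
  have hr : r < 0 := by
    apply div_neg_of_neg_of_pos
    · nlinarith
    · have h1 : (0:ℝ) < m ^ 2 - 1 := by nlinarith
      have h2 : (0:ℝ) < β ^ 2 := by positivity
      nlinarith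
  have hs2 : s ^ 2 = (r : ℂ) := by
    rw [hr_def]
    push_cast
    rw [eq_div_iff (by push_cast at hb2 ⊢; exact hb2)]
    linear_combination hsq
  -- imaginary part of s is nonzero
  have him : s.re * s.im + s.im * s.re = 0 := by
    have := congrArg Complex.im hs2
    simpa [pow_two, Complex.mul_im] using this
  have hre : s.re * s.re - s.im * s.im = r := by
    have := congrArg Complex.re hs2
    simpa [pow_two, Complex.mul_re] using this
  have hy : s.im ≠ 0 := by
    intro h
    rw [h] at hre
    nlinarith [sq_nonneg s.re, hre]
  -- real coordinates
  set A : ℝ := Real.pi * z.re with hA_def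
  set B : ℝ := Real.pi * z.im with hB_def
  have hwre : ((Real.pi : ℂ) * z).re = A := by simp [hA_def, Complex.mul_re]
  have hwim : ((Real.pi : ℂ) * z).im = B := by simp [hB_def, Complex.mul_im]
  have hWre : ((m : ℂ) * (Real.pi : ℂ) * z).re = m * A := by
    simp [hA_def, Complex.mul_re, Complex.mul_im]; ring
  have hWim : ((m : ℂ) * (Real.pi : ℂ) * z).im = m * B := by
    simp [hB_def, Complex.mul_re, Complex.mul_im]; ring
  have hsim : s.im = Real.cos A * Real.sinh B := by
    rw [hs_def, aux_sin_im, hwre, hwim]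
  have hSim : S.im = Real.cos (m * A) * Real.sinh (m * B) := by
    rw [hS_def, aux_sin_im, hWre, hWim]
  have hcre : c.re = Real.cos A * Real.cosh B := by
    rw [hc_def, aux_cos_re, hwre, hwim]
  have hCre : C.re = Real.cos (m * A) * Real.cosh (m * B) := by
    rw [hC_def, aux_cos_re, hWre, hWim]
  -- the two real equations
  have E1 : Real.cos (m * A) * Real.sinh (m * B) = β * (Real.cos A * Real.sinh B) := by
    have := congrArg Complex.im hs
    rw [hSim] at this
    rw [this]
    simp [Complex.mul_im, hsim]
  have E2 : m * (Real.cos (m * A) * Real.cosh (m * B)) = β * (Real.cos A * Real.cosh B) := by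
    have := congrArg Complex.re hc2
    rw [Complex.mul_re] at this
    simp only [Complex.ofReal_re, Complex.ofReal_im, zero_mul, sub_zero] at this
    rw [hCre] at this
    rw [this, Complex.mul_re]
    simp [hcre]
  -- nonvanishing facts
  have hcosA : Real.cos A ≠ 0 := by
    intro h; rw [hsim, h] at hy; simp at hy
  have hsinhB : Real.sinh B ≠ 0 := by
    intro h; rw [hsim, h] at hy; simp at hy
  have hcosmA : Real.cos (m * A) ≠ 0 := by
    intro h
    rw [h, zero_mul] at E1
    have : β * (Real.cos A * Real.sinh B) ≠ 0 :=
      mul_ne_zero (ne_of_gt hβ0) (mul_ne_zero hcosA hsinhB)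
    exact this E1.symm
  -- cross-multiplied key equation
  have key : Real.sinh (m * B) * Real.cosh B = m * (Real.cosh (m * B) * Real.sinh B) := by
    have cross : (Real.cos (m * A) * Real.sinh (m * B)) * (β * (Real.cos A * Real.cosh B)) =
        (β * (Real.cos A * Real.sinh B)) * (m * (Real.cos (m * A) * Real.cosh (m * B))) := by
      linear_combination (β * (Real.cos A * Real.cosh B)) * E1 -
        (β * (Real.cos A * Real.sinh B)) * E2
    have hne : β * Real.cos A * Real.cos (m * A) ≠ 0 :=
      mul_ne_zero (mul_ne_zero (ne_of_gt hβ0) hcosA) hcosmA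
    apply mul_left_cancel₀ hne
    linear_combination cross
  -- contradiction using strict concavity of tanh
  rcases lt_trichotomy B 0 with hB | hB | hB
  · have h := aux_star hm (show (0:ℝ) < -B by linarith)
    rw [show m * -B = -(m * B) by ring, Real.sinh_neg, Real.cosh_neg, Real.sinh_neg,
      Real.cosh_neg] at h
    nlinarith [h, key]
  · exact hsinhB (by rw [hB, Real.sinh_zero])
  · have h := aux_star hm hB
    nlinarith [h, key]
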